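/- Let T and T' be compactly generated triangulated categories and (F, G) an adjoint pair with F: T' → T and G: T → T'. Then the following are equivalent: (a) F sends compact objects to compact objects; (b) G preserves infinite direct sums; (c) G has a right adjoint. -/

import Mathlib

open CategoryTheory Limits Pretriangulated

universe w v u

namespace Paper

section Summands

variable {C : Type*} {D : Type*} [Category C] [Category D]

/-- Every object of the target is a direct summand (retract) of an object in the image. -/
def DenseUpToSummands (F : C ⥤ D) : Prop :=
  ∀ X : D, ∃ (A : C) (s : X ⟶ F.obj A) (r : F.obj A ⟶ X), s ≫ r = 𝟙 X

/-- A functor is an equivalence up to direct summands if it is fully faithful and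
every object of the target is a direct summand of an object in its image. -/
structure IsEquivalenceUpToSummands (F : C ⥤ D) : Prop where
  full : F.Full
  faithful : F.Faithful
  dense : DenseUpToSummands F

end Summands

section Compact

variable {T : Type u} [Category.{v} T] [Preadditive T]

/-- An object `X` is compact if, for every set-indexed family with a coproduct, the
canonical map `⨁ᵢ Hom(X, Yᵢ) → Hom(X, ∐ᵢ Yᵢ)` is bijective. -/
def IsCompactObj (X : T) : Prop :=
  ∀ (ι : Type v) [DecidableEq ι], ∀ (g : ι → T) (c : Cofan g) (_ : IsColimit c),
    Function.Bijective (DirectSum.toAddMonoid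
      (fun i => AddMonoidHom.mk' (fun u : X ⟶ g i => u ≫ c.inj i)
        (fun _ _ => Preadditive.add_comp _ _ _ _ _ _)))

variable (T) in
/-- A triangulated category with small coproducts is compactly generated if there is a
set of compact objects such that any object receiving no nonzero maps from their shifts
is zero. -/
def IsCompactlyGenerated [HasShift T ℤ] : Prop :=
  ∃ (ι : Type v) (g : ι → T), (∀ i, IsCompactObj (g i)) ∧
    ∀ X : T, (∀ (i : ι) (n : ℤ) (f : g i ⟶ X⟦n⟧), f = 0) → IsZero X

/-- `a` is a compact generator. -/
def IsCompactGenerator [HasShift T ℤ] (a : T) : Prop :=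
  IsCompactObj a ∧ ∀ X : T, (∀ (n : ℤ) (f : a ⟶ X⟦n⟧), f = 0) → IsZero X

end Compact

namespace Aux

section Helpers

variable {C : Type*} {D : Type*} [Category C] [Category D]

/-- generic pi-transfer of bijectivity -/
lemma pi_transfer {M N : Type*} {ι : Type*} {A B : ι → Type*}
    (pM : M → ∀ i, A i) (pN : N → ∀ i, B i) (θM : M → N) (θi : ∀ i, A i → B i)
    (hM : Function.Bijective pM) (hN : Function.Bijective pN)
    (hi : ∀ i, Function.Bijective (θi i))
    (compat : ∀ x i, pN (θM x) i = θi i (pM x i)) : Function.Bijective θM := by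
  constructor
  · intro x y hxy
    apply hM.injective
    funext i
    apply (hi i).injective
    rw [← compat, ← compat, hxy]
  · intro n
    obtain ⟨a, ha⟩ := hM.surjective ((fun i => (Equiv.ofBijective _ (hi i)).symm (pN n i)))
    refine ⟨a, hN.injective ?_⟩
    funext i
    rw [compat, ha]
    exact (Equiv.ofBijective _ (hi i)).apply_symm_apply _

/-- hom into cofan point decomposes as product -/
lemma cofan_hom_bijective {ι : Type*} {f : ι → C} {d : Cofan f} (hd : IsColimit d) (Z : C) :
    Function.Bijective (fun (v : d.pt ⟶ Z) => fun i => d.inj i ≫ v) := by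
  constructor
  · intro x y hxy
    exact Cofan.IsColimit.hom_ext hd _ _ (fun i => congrFun hxy i)
  · intro p
    exact ⟨Cofan.IsColimit.desc hd p, funext fun i => Cofan.IsColimit.fac hd p i⟩

/-- transporting colimit cofans along a colimit-preserving functor -/
noncomputable def isColimitCofanMap (G : C ⥤ D) {ι : Type*} {f : ι → C}
    {d : Cofan f} (hd : IsColimit d) [PreservesColimitsOfShape (Discrete ι) G] :
    IsColimit (Cofan.mk (G.obj d.pt) (fun i => G.map (d.inj i))) :=
  isColimitCofanMkObjOfIsColimit G f d.inj (show IsColimit (Cofan.mk d.pt d.inj) from hd)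

/-- converse: from a colimit structure on the naive image cofan, get that the functor
sends the cocone to a colimit cocone. -/
noncomputable def isColimitMapCoconeOfCofan (G : C ⥤ D) {ι : Type*} {f : ι → C}
    (d : Cofan f)
    (h : IsColimit (Cofan.mk (G.obj d.pt) (fun i => G.map (d.inj i)))) :
    IsColimit (G.mapCocone d) :=
  (isColimitMapCoconeCofanMkEquiv G f d.inj).symm h

end Helpers

section Transfer

variable {C : Type*} {D : Type*} [Category C] [Category D] [Preadditive C] [Preadditive D]

/-- The canonical map `⊕ᵢ Hom(X, gᵢ) → Hom(X, P)` induced by maps `gᵢ ⟶ P`. -/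
noncomputable abbrev homMap {ι : Type*} [DecidableEq ι] (g : ι → C) (X : C) {P : C}
    (inj : ∀ i, g i ⟶ P) : DirectSum ι (fun i => X ⟶ g i) →+ (X ⟶ P) :=
  DirectSum.toAddMonoid (fun i => AddMonoidHom.mk' (fun u : X ⟶ g i => u ≫ inj i)
    (fun _ _ => Preadditive.add_comp _ _ _ _ _ _))

lemma homMap_of {ι : Type*} [DecidableEq ι] (g : ι → C) (X : C) {P : C}
    (inj : ∀ i, g i ⟶ P) (i : ι) (u : X ⟶ g i) :
    homMap g X inj (DirectSum.of _ i u) = u ≫ inj i :=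
  DirectSum.toAddMonoid_of _ _ _

/-- Transfer bijectivity of the canonical direct-sum-to-hom map along compatible
additive equivalences. -/
lemma bijective_homMap_iff {ι : Type*} [DecidableEq ι] {g : ι → C} {g' : ι → D}
    {X : C} {X' : D} {P : C} {P' : D}
    (inj : ∀ i, g i ⟶ P) (inj' : ∀ i, g' i ⟶ P')
    (φ : ∀ i, (X ⟶ g i) ≃+ (X' ⟶ g' i)) (Φ : (X ⟶ P) ≃+ (X' ⟶ P'))
    (compat : ∀ (i : ι) (u : X ⟶ g i), Φ (u ≫ inj i) = φ i u ≫ inj' i) :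
    Function.Bijective (homMap g X inj) ↔ Function.Bijective (homMap g' X' inj') := by
  classical
  let Ψ : DirectSum ι (fun i => X ⟶ g i) ≃+ DirectSum ι (fun i => X' ⟶ g' i) :=
    DFinsupp.mapRange.addEquiv φ
  have hΨ : ∀ (i : ι) (u : X ⟶ g i),
      Ψ (DirectSum.of _ i u) = DirectSum.of _ i (φ i u) := by
    intro i u
    exact DFinsupp.mapRange_single (hf := fun i => map_zero (φ i))
  have key : ∀ x, Φ (homMap g X inj x) = homMap g' X' inj' (Ψ x) := by
    intro x
    have : (Φ.toAddMonoidHom.comp (homMap g X inj)) =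
        (homMap g' X' inj').comp Ψ.toAddMonoidHom := by
      apply DirectSum.addHom_ext
      intro i u
      simp only [AddMonoidHom.comp_apply, AddEquiv.coe_toAddMonoidHom, homMap_of]
      rw [compat, hΨ, homMap_of]
    exact DFunLike.congr_fun this x
  constructor
  · intro hb
    have : (homMap g' X' inj' : _ → _) = Φ ∘ (homMap g X inj) ∘ Ψ.symm := by
      funext y
      simp [key (Ψ.symm y)]
    rw [this]
    exact Φ.bijective.comp (hb.comp Ψ.symm.bijective)
  · intro hb
    have : (homMap g X inj : _ → _) = Φ.symm ∘ (homMap g' X' inj') ∘ Ψ := by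
      funext y
      simp [← key y]
    rw [this]
    exact Φ.symm.bijective.comp (hb.comp Ψ.bijective)

end Transfer

section HomEquivs

variable {C : Type*} {D : Type*} [Category C] [Category D] [Preadditive C] [Preadditive D]

/-- additive hom-equivalence from an adjunction whose right adjoint is additive -/
noncomputable def homAddEquiv {F : C ⥤ D} {G : D ⥤ C} (adj : F ⊣ G) [G.Additive]
    (X : C) (Y : D) : (F.obj X ⟶ Y) ≃+ (X ⟶ G.obj Y) :=
  AddEquiv.mk' (adj.homEquiv X Y) (by
    intro f g
    simp [Adjunction.homEquiv_unit, Functor.map_add, Preadditive.comp_add])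

lemma homAddEquiv_naturality {F : C ⥤ D} {G : D ⥤ C} (adj : F ⊣ G) [G.Additive]
    {X : C} {Y Y' : D} (u : F.obj X ⟶ Y) (h : Y ⟶ Y') :
    homAddEquiv adj X Y' (u ≫ h) = homAddEquiv adj X Y u ≫ G.map h :=
  adj.homEquiv_naturality_right u h

/-- precomposition with an isomorphism, as an additive equivalence -/
noncomputable def precompAddEquiv {X X' : C} (e : X ≅ X') (Z : C) :
    (X' ⟶ Z) ≃+ (X ⟶ Z) :=
  AddEquiv.mk' ⟨fun u => e.hom ≫ u, fun v => e.inv ≫ v,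
      fun u => by simp, fun v => by simp⟩
    (fun u u' => by simp [Preadditive.comp_add])

end HomEquivs

section Shifts

variable {T : Type u} [Category.{v} T] [Preadditive T] [HasShift T ℤ]
  [∀ n : ℤ, (shiftFunctor T n).Additive]

/-- the additive adjunction equivalence `(X⟦a⟧ ⟶ Z) ≃+ (X ⟶ Z⟦b⟧)` for `a + b = 0` -/
noncomputable def shiftHomEquiv (X Z : T) (a b : ℤ) (h : a + b = 0) :
    ((X⟦a⟧ ⟶ Z) ≃+ (X ⟶ Z⟦b⟧)) :=
  letI : (shiftEquiv' T a b h).inverse.Additive :=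
    (inferInstance : (shiftFunctor T b).Additive)
  homAddEquiv (shiftEquiv' T a b h).toAdjunction X Z

lemma shiftHomEquiv_naturality {X Z Z' : T} (a b : ℤ) (h : a + b = 0)
    (u : X⟦a⟧ ⟶ Z) (v : Z ⟶ Z') :
    shiftHomEquiv X Z' a b h (u ≫ v) = shiftHomEquiv X Z a b h u ≫ v⟦b⟧' := by
  letI : (shiftEquiv' T a b h).inverse.Additive :=
    (inferInstance : (shiftFunctor T b).Additive)
  exact homAddEquiv_naturality (shiftEquiv' T a b h).toAdjunction u v

end Shifts

section CompactStable

variable {T : Type u} [Category.{v} T] [Preadditive T]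

lemma isCompactObj_of_iso {X X' : T} (e : X ≅ X') (h : IsCompactObj X) :
    IsCompactObj X' := by
  intro ι _ g c hc
  exact (bijective_homMap_iff c.inj c.inj (fun i => precompAddEquiv e _)
    (precompAddEquiv e _)
    (fun i u => (Category.assoc _ _ _).symm)).mpr (h ι g c hc)

variable [HasShift T ℤ] [∀ n : ℤ, (shiftFunctor T n).Additive]

lemma isCompactObj_shift {X : T} (h : IsCompactObj X) (a b : ℤ) (hab : a + b = 0) :
    IsCompactObj (X⟦a⟧) := by
  intro ι _ g c hc
  have hd : IsColimit (Cofan.mk ((c.pt)⟦b⟧) (fun i => (c.inj i)⟦b⟧')) :=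
    isColimitCofanMap (shiftFunctor T b) hc
  have hb := h ι (fun i => (g i)⟦b⟧) (Cofan.mk _ _) hd
  exact (bijective_homMap_iff (g := g) (g' := fun i => (g i)⟦b⟧) c.inj
    (fun i => (c.inj i)⟦b⟧') (fun i => shiftHomEquiv X (g i) a b hab)
    (shiftHomEquiv X c.pt a b hab)
    (fun i u => shiftHomEquiv_naturality a b hab u (c.inj i))).mpr hb

end CompactStable

section SumAlgebra

variable {A : ULift.{v} ℕ → Type w} [∀ j, AddCommGroup (A j)]
  [DecidableEq (ULift.{v} ℕ)]
  (f : ∀ j : ℕ, A ⟨j⟩ →+ A ⟨j + 1⟩)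

open DirectSum

noncomputable def shiftHom : DirectSum (ULift.{v} ℕ) A →+ DirectSum (ULift.{v} ℕ) A :=
  DirectSum.toAddMonoid (fun j => (DirectSum.of A ⟨j.down + 1⟩).comp (f j.down))

lemma shiftHom_of (j : ULift.{v} ℕ) (b : A j) :
    shiftHom f (DirectSum.of A j b) = DirectSum.of A ⟨j.down + 1⟩ (f j.down b) :=
  DirectSum.toAddMonoid_of _ _ _

lemma shiftHom_apply_zero (x : DirectSum (ULift.{v} ℕ) A) :
    shiftHom f x ⟨0⟩ = 0 := by
  induction x using DirectSum.induction_on with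
  | zero => simp
  | of j b =>
      obtain ⟨jd⟩ := j
      rw [shiftHom_of]
      exact DirectSum.of_eq_of_ne _ _ _ (by simp)
  | add x y hx hy => rw [map_add, DirectSum.add_apply, hx, hy, add_zero]

lemma shiftHom_apply_succ (x : DirectSum (ULift.{v} ℕ) A) (n : ℕ) :
    shiftHom f x ⟨n + 1⟩ = f n (x ⟨n⟩) := by
  induction x using DirectSum.induction_on with
  | zero => simp
  | of j b =>
      obtain ⟨jd⟩ := j
      rw [shiftHom_of]
      by_cases hj : jd = n
      · subst hj
        rw [DirectSum.of_eq_same]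
        rw [show (DirectSum.of A ⟨jd⟩ b) ⟨jd⟩ = b from DirectSum.of_eq_same _ _]
      · rw [DirectSum.of_eq_of_ne _ _ _ (by simp [hj, Ne.symm hj]),
          DirectSum.of_eq_of_ne _ _ _ (by simp [hj, Ne.symm hj]), map_zero]
  | add x y hx hy =>
      rw [map_add, DirectSum.add_apply, DirectSum.add_apply, hx, hy, map_add]

lemma sub_shiftHom_injective :
    Function.Injective (fun x : DirectSum (ULift.{v} ℕ) A => x - shiftHom f x) := by
  intro x y hxy
  have key : ∀ z : DirectSum (ULift.{v} ℕ) A, z - shiftHom f z = 0 → z = 0 := by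
    intro z hz
    have hz' : z = shiftHom f z := sub_eq_zero.mp hz
    have hn : ∀ n : ℕ, z ⟨n⟩ = 0 := by
      intro n
      induction n with
      | zero => rw [hz']; exact shiftHom_apply_zero f z
      | succ n ih =>
          conv_lhs => rw [hz']
          rw [shiftHom_apply_succ, ih, map_zero]
    exact DFinsupp.ext fun j => by obtain ⟨n⟩ := j; exact hn n
  have h2 : (x - y) - shiftHom f (x - y) = 0 := by
    rw [map_sub, sub_sub_sub_comm,
      show x - shiftHom f x = y - shiftHom f y from hxy, sub_self]
  exact sub_eq_zero.mp (key _ h2)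

end SumAlgebra

section Engine

variable {T : Type u} [Category.{v} T] [HasZeroObject T] [HasShift T ℤ] [Preadditive T]
  [∀ n : ℤ, (shiftFunctor T n).Additive] [Pretriangulated T] [HasCoproducts.{v} T]

/-- the localizing hull of a family of objects -/
inductive Hull {κ : Type v} (c : κ → T) : T → Prop
  | base (k : κ) : Hull c (c k)
  | of_iso {X Y : T} (e : X ≅ Y) : Hull c X → Hull c Y
  | cofan {ι' : Type v} (f : ι' → T) (d : Cofan f) (hd : IsColimit d)
      (hf : ∀ i, Hull c (f i)) : Hull c d.pt
  | cone {A B Z : T} (φ : A ⟶ B) (ψ : B ⟶ Z) (χ : Z ⟶ A⟦(1 : ℤ)⟧)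
      (hdist : Triangle.mk φ ψ χ ∈ distTriang T) : Hull c A → Hull c B → Hull c Z

variable {T'' : Type u} [Category.{v} T''] [HasZeroObject T''] [HasShift T'' ℤ]
  [Preadditive T''] [∀ n : ℤ, (shiftFunctor T'' n).Additive] [Pretriangulated T'']

variable (G : T ⥤ T'') [G.CommShift ℤ] [G.IsTriangulated]
variable {κ : Type v} (c : κ → T) (Y'' : T'')
variable (hpres : ∀ (ι' : Type v) (f : ι' → T) (d : Cofan f) (_ : IsColimit d),
    IsColimit (Cofan.mk (G.obj d.pt) (fun i => G.map (d.inj i))))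

structure StepData (X : T) (u : G.obj X ⟶ Y'') where
  X' : T
  e : X ⟶ X'
  u' : G.obj X' ⟶ Y''
  hu : G.map e ≫ u' = u
  hker : ∀ (k : κ) (w : c k ⟶ X), G.map w ≫ u = 0 → w ≫ e = 0
  hull : Hull c X → Hull c X'

noncomputable def mkStep (X : T) (u : G.obj X ⟶ Y'') : StepData G c Y'' X u :=
  let I : Type v := Σ k : κ, { w : c k ⟶ X // G.map w ≫ u = 0 }
  let fI : I → T := fun t => c t.1
  let km : (∐ fI) ⟶ X := Sigma.desc fun t => t.2.1
  let h₁ := Pretriangulated.distinguished_cocone_triangle km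
  let Z := h₁.choose
  let e : X ⟶ Z := h₁.choose_spec.choose
  let δ : Z ⟶ (∐ fI)⟦(1 : ℤ)⟧ := h₁.choose_spec.choose_spec.choose
  have hdist : Triangle.mk km e δ ∈ distTriang T := h₁.choose_spec.choose_spec.choose_spec
  have hcolim := hpres I fI (Cofan.mk (∐ fI) (Sigma.ι fI)) (coproductIsCoproduct fI)
  have hzero : G.map km ≫ u = 0 := Cofan.IsColimit.hom_ext hcolim _ _ (fun t => by
    show G.map (Sigma.ι fI t) ≫ G.map km ≫ u = G.map (Sigma.ι fI t) ≫ 0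
    rw [comp_zero, ← G.map_comp_assoc,
      show Sigma.ι fI t ≫ km = t.2.1 from Sigma.ι_desc _ _, t.2.2])
  have h₂ := Triangle.yoneda_exact₂ _ (G.map_distinguished _ hdist) u hzero
  { X' := Z, e := e, u' := h₂.choose,
    hu := h₂.choose_spec.symm,
    hker := fun k w hw => by
      have hw' : w = (Sigma.ι fI ⟨k, w, hw⟩) ≫ km :=
        (Sigma.ι_desc (f := fI) (fun t => t.2.1) ⟨k, w, hw⟩).symm
      rw [hw', Category.assoc,
        show km ≫ e = 0 from comp_distTriang_mor_zero₁₂ _ hdist, comp_zero],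
    hull := fun hX => Hull.cone km e δ hdist
      (Hull.cofan fI _ (coproductIsCoproduct fI) (fun t => Hull.base t.1)) hX }

noncomputable def tower : ℕ → Σ X : T, (G.obj X ⟶ Y'')
  | 0 => ⟨∐ (fun t : (Σ k : κ, (G.obj (c k) ⟶ Y'')) => c t.1),
      Cofan.IsColimit.desc (hpres _ _ _
        (coproductIsCoproduct (fun t : (Σ k : κ, (G.obj (c k) ⟶ Y'')) => c t.1)))
        (fun t => t.2)⟩
  | (j + 1) =>
      let s := mkStep G c Y'' hpres (tower j).1 (tower j).2
      ⟨s.X', s.u'⟩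

noncomputable def towt (j : ℕ) :
    (tower G c Y'' hpres j).1 ⟶ (tower G c Y'' hpres (j + 1)).1 :=
  (mkStep G c Y'' hpres (tower G c Y'' hpres j).1 (tower G c Y'' hpres j).2).e

lemma towt_u (j : ℕ) :
    G.map (towt G c Y'' hpres j) ≫ (tower G c Y'' hpres (j + 1)).2
      = (tower G c Y'' hpres j).2 :=
  (mkStep G c Y'' hpres (tower G c Y'' hpres j).1 (tower G c Y'' hpres j).2).hu

lemma towt_ker (j : ℕ) (k : κ) (w : c k ⟶ (tower G c Y'' hpres j).1)
    (hw : G.map w ≫ (tower G c Y'' hpres j).2 = 0) :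
    w ≫ towt G c Y'' hpres j = 0 :=
  (mkStep G c Y'' hpres (tower G c Y'' hpres j).1 (tower G c Y'' hpres j).2).hker k w hw

lemma tower_hull (j : ℕ) : Hull c (tower G c Y'' hpres j).1 := by
  induction j with
  | zero =>
      exact Hull.cofan _ _
        (coproductIsCoproduct (fun t : (Σ k : κ, (G.obj (c k) ⟶ Y'')) => c t.1))
        (fun t => Hull.base t.1)
  | succ j ih =>
      exact (mkStep G c Y'' hpres (tower G c Y'' hpres j).1 (tower G c Y'' hpres j).2).hull ih

lemma tower_zero_fac (t : Σ k : κ, (G.obj (c k) ⟶ Y'')) :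
    G.map (Sigma.ι (fun t : (Σ k : κ, (G.obj (c k) ⟶ Y'')) => c t.1) t)
      ≫ (tower G c Y'' hpres 0).2 = t.2 :=
  Cofan.IsColimit.fac (hpres _ _ _
    (coproductIsCoproduct (fun t : (Σ k : κ, (G.obj (c k) ⟶ Y'')) => c t.1)))
    (fun t => t.2) t

noncomputable def towtle : ∀ {j J : ℕ}, j ≤ J →
    ((tower G c Y'' hpres j).1 ⟶ (tower G c Y'' hpres J).1) :=
  fun h => Nat.leRecOn h (fun {n} v => v ≫ towt G c Y'' hpres n) (𝟙 _)

lemma towtle_self (j : ℕ) : towtle G c Y'' hpres (le_refl j) = 𝟙 _ :=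
  Nat.leRecOn_self _

lemma towtle_succ {j J : ℕ} (h : j ≤ J) :
    towtle G c Y'' hpres (h.trans (Nat.le_succ J))
      = towtle G c Y'' hpres h ≫ towt G c Y'' hpres J :=
  Nat.leRecOn_succ h _

set_option maxHeartbeats 1000000 in
include hpres in
theorem engine (hcpt : ∀ k, IsCompactObj (c k))
    (hcpt' : ∀ k, IsCompactObj ((c k)⟦(-1 : ℤ)⟧)) :
    ∃ (X : T) (u : G.obj X ⟶ Y''), Hull c X ∧
      ∀ k : κ, Function.Bijective (fun f : c k ⟶ X => G.map f ≫ u) := by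
  classical
  set tw := tower G c Y'' hpres with htw
  set tt := towt G c Y'' hpres with htt
  let XX : ULift.{v} ℕ → T := fun j => (tw j.down).1
  let P : T := ∐ XX
  let s : P ⟶ P := Sigma.desc (fun j => tt j.down ≫ Sigma.ι XX ⟨j.down + 1⟩)
  obtain ⟨Xinf, π, δ, hdist⟩ := Pretriangulated.distinguished_cocone_triangle (𝟙 P - s)
  let α : ∀ j : ℕ, XX ⟨j⟩ ⟶ Xinf := fun j => Sigma.ι XX ⟨j⟩ ≫ π
  have hιs : ∀ j : ULift.{v} ℕ, Sigma.ι XX j ≫ s = tt j.down ≫ Sigma.ι XX ⟨j.down + 1⟩ :=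
    fun j => Sigma.ι_desc _ _
  have hπ0 : (𝟙 P - s) ≫ π = 0 := comp_distTriang_mor_zero₁₂ _ hdist
  have hα : ∀ j : ℕ, α j = tt j ≫ α (j + 1) := by
    intro j
    have h0 : Sigma.ι XX ⟨j⟩ ≫ (𝟙 P - s) ≫ π = 0 := by rw [hπ0, comp_zero]
    rw [Preadditive.sub_comp, Category.id_comp, Preadditive.comp_sub] at h0
    have := sub_eq_zero.mp h0
    rw [show Sigma.ι XX ⟨j⟩ ≫ s ≫ π = tt j ≫ Sigma.ι XX ⟨j+1⟩ ≫ π by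
      rw [← Category.assoc, hιs ⟨j⟩, Category.assoc]] at this
    exact this
  have hGP := hpres _ XX (Cofan.mk P (Sigma.ι XX)) (coproductIsCoproduct XX)
  let U : G.obj P ⟶ Y'' := Cofan.IsColimit.desc hGP (fun j => (tw j.down).2)
  have hU : ∀ j : ULift.{v} ℕ, G.map (Sigma.ι XX j) ≫ U = (tw j.down).2 :=
    fun j => Cofan.IsColimit.fac hGP _ j
  have hzero : G.map (𝟙 P - s) ≫ U = 0 := by
    apply Cofan.IsColimit.hom_ext hGP
    intro j
    show G.map (Sigma.ι XX j) ≫ G.map (𝟙 P - s) ≫ U = G.map (Sigma.ι XX j) ≫ 0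
    rw [comp_zero, ← G.map_comp_assoc, Preadditive.comp_sub, Category.comp_id, hιs j,
      G.map_sub, Preadditive.sub_comp, hU, G.map_comp, Category.assoc, hU,
      towt_u G c Y'' hpres j.down, sub_self]
  obtain ⟨uinf, huinf₀⟩ : ∃ uinf : G.obj Xinf ⟶ Y'', U = G.map π ≫ uinf :=
    Triangle.yoneda_exact₂ _ (G.map_distinguished _ hdist) U hzero
  have huinf : U = G.map π ≫ uinf := huinf₀
  clear huinf₀
  have hαu : ∀ j : ℕ, G.map (α j) ≫ uinf = (tw j).2 := by
    intro j
    rw [show α j = Sigma.ι XX ⟨j⟩ ≫ π from rfl, G.map_comp, Category.assoc, ← huinf]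
    exact hU ⟨j⟩
  have hαle : ∀ (j J : ℕ) (h : j ≤ J), towtle G c Y'' hpres h ≫ α J = α j := by
    intro j J h
    induction J, h using Nat.le_induction with
    | base => rw [towtle_self]; exact Category.id_comp _
    | succ J hJ ih =>
        rw [show (towtle G c Y'' hpres (Nat.le_succ_of_le hJ) :
              (tw j).1 ⟶ (tw (J+1)).1) = towtle G c Y'' hpres hJ ≫ tt J from
            towtle_succ G c Y'' hpres hJ,
          Category.assoc, ← hα J, ih]
  -- factorization through a finite stage
  have fact : ∀ (Z : T), IsCompactObj Z → IsCompactObj (Z⟦(-1 : ℤ)⟧) →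
      ∀ f : Z ⟶ Xinf, ∃ (J : ℕ) (w : Z ⟶ (tw J).1), f = w ≫ α J := by
    intro Z hZ hZ' f
    -- injectivity of composition with (𝟙 P - s) on Hom(Z⟦-1⟧, P)
    have hbij' : Function.Bijective (homMap XX ((Z⟦(-1:ℤ)⟧ : T)) (Sigma.ι XX)) :=
      hZ' (ULift.{v} ℕ) XX (Cofan.mk P (Sigma.ι XX)) (coproductIsCoproduct XX)
    have h1 : Function.Injective (fun (x : (Z⟦(-1:ℤ)⟧ : T) ⟶ P) => x ≫ (𝟙 P - s)) := by
      let AA : ULift.{v} ℕ → Type v := fun j => ((Z⟦(-1:ℤ)⟧ : T) ⟶ XX j)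
      let fj : ∀ j : ℕ, AA ⟨j⟩ →+ AA ⟨j+1⟩ :=
        fun j => AddMonoidHom.mk' (fun w => w ≫ tt j)
          (fun _ _ => Preadditive.add_comp _ _ _ _ _ _)
      have hSsq : ∀ x, homMap XX ((Z⟦(-1:ℤ)⟧ : T)) (Sigma.ι XX) (shiftHom (A := AA) fj x)
          = homMap XX ((Z⟦(-1:ℤ)⟧ : T)) (Sigma.ι XX) x ≫ s := by
        intro x
        induction x using DirectSum.induction_on with
        | zero => rw [map_zero, map_zero, zero_comp]
        | of j a =>
            obtain ⟨jd⟩ := j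
            rw [shiftHom_of (A := AA), homMap_of, homMap_of, Category.assoc, hιs ⟨jd⟩]
            show (a ≫ tt jd) ≫ Sigma.ι XX ⟨jd + 1⟩ = _
            rw [Category.assoc]
        | add x y hx hy => rw [map_add, map_add, map_add, hx, hy, Preadditive.add_comp]
      have hsub : ∀ x, homMap XX ((Z⟦(-1:ℤ)⟧ : T)) (Sigma.ι XX) x ≫ (𝟙 P - s)
          = homMap XX ((Z⟦(-1:ℤ)⟧ : T)) (Sigma.ι XX) (x - shiftHom (A := AA) fj x) := by
        intro x
        rw [Preadditive.comp_sub, Category.comp_id, map_sub, hSsq]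
      intro x y hxy
      obtain ⟨a, rfl⟩ := hbij'.surjective x
      obtain ⟨b, rfl⟩ := hbij'.surjective y
      simp only at hxy
      have hxy2 := (hsub a).symm.trans (hxy.trans (hsub b))
      exact congrArg _ (sub_shiftHom_injective (A := AA) fj (hbij'.injective hxy2))
    have h2 : Function.Injective (fun (x : Z ⟶ (P⟦(1:ℤ)⟧ : T)) => x ≫ (𝟙 P - s)⟦(1:ℤ)⟧') := by
      intro x y hxy
      let E := shiftHomEquiv (T := T) Z P (-1) 1 (by ring)
      have hx1 : x = E (E.symm x) := (E.apply_symm_apply x).symm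
      have hy1 : y = E (E.symm y) := (E.apply_symm_apply y).symm
      have : E (E.symm x ≫ (𝟙 P - s)) = E (E.symm y ≫ (𝟙 P - s)) := by
        rw [shiftHomEquiv_naturality, shiftHomEquiv_naturality, ← hx1, ← hy1]
        exact hxy
      have := h1 (E.injective this)
      rw [hx1, hy1, this]
    have h3 : f ≫ δ = 0 := by
      apply h2
      show (f ≫ δ) ≫ _ = (0 : Z ⟶ (P⟦(1:ℤ)⟧ : T)) ≫ _
      rw [zero_comp, Category.assoc,
        show δ ≫ (𝟙 P - s)⟦(1:ℤ)⟧' = 0 from comp_distTriang_mor_zero₃₁ _ hdist, comp_zero]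
    obtain ⟨w, hw₀⟩ : ∃ w : Z ⟶ P, f = w ≫ π := Triangle.coyoneda_exact₃ _ hdist f h3
    have hw : f = w ≫ π := hw₀
    clear hw₀
    have hbijZ : Function.Bijective (homMap XX Z (Sigma.ι XX)) :=
      hZ (ULift.{v} ℕ) XX (Cofan.mk P (Sigma.ι XX)) (coproductIsCoproduct XX)
    obtain ⟨x, rfl⟩ := hbijZ.surjective w
    have claim : ∀ x : DirectSum (ULift.{v} ℕ) (fun j => Z ⟶ XX j),
        ∃ (J : ℕ) (w' : Z ⟶ (tw J).1),
          homMap XX Z (Sigma.ι XX) x ≫ π = w' ≫ α J := by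
      intro x
      induction x using DirectSum.induction_on with
      | zero => exact ⟨0, 0, by rw [map_zero, zero_comp, zero_comp]⟩
      | of j a =>
          refine ⟨j.down, a, ?_⟩
          rw [homMap_of, Category.assoc]
      | add x y hx hy =>
          obtain ⟨J1, w1, h1'⟩ := hx
          obtain ⟨J2, w2, h2'⟩ := hy
          refine ⟨max J1 J2,
            w1 ≫ towtle G c Y'' hpres (le_max_left J1 J2)
              + w2 ≫ towtle G c Y'' hpres (le_max_right J1 J2), ?_⟩
          rw [map_add, Preadditive.add_comp, h1', h2', Preadditive.add_comp,
            Category.assoc, Category.assoc,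
            hαle _ _ (le_max_left J1 J2), hαle _ _ (le_max_right J1 J2)]
    obtain ⟨J, w', hw'⟩ := claim x
    exact ⟨J, w', by rw [hw, hw']⟩
  -- conclusion
  refine ⟨Xinf, uinf, ?_, ?_⟩
  · refine Hull.cone (𝟙 P - s) π δ hdist ?_ ?_ <;>
      exact Hull.cofan XX _ (coproductIsCoproduct XX)
        (fun j => tower_hull G c Y'' hpres j.down)
  · intro k
    constructor
    · intro f g hfg
      simp only at hfg
      obtain ⟨J1, w1, rfl⟩ := fact _ (hcpt k) (hcpt' k) f
      obtain ⟨J2, w2, rfl⟩ := fact _ (hcpt k) (hcpt' k) g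
      -- push both to a common stage
      have key : ∀ (J : ℕ) (w : c k ⟶ (tw J).1),
          G.map (w ≫ α J) ≫ uinf = 0 → w ≫ α J = 0 := by
        intro J w hw0
        have : G.map w ≫ (tw J).2 = 0 := by
          rw [← hαu J, ← Category.assoc, ← G.map_comp]
          exact hw0
        have hker := towt_ker G c Y'' hpres J k w this
        rw [hα J, ← Category.assoc, hker, zero_comp]
      have hdiff : (w1 ≫ towtle G c Y'' hpres (le_max_left J1 J2)
            - w2 ≫ towtle G c Y'' hpres (le_max_right J1 J2)) ≫ α (max J1 J2) = 0 := by
        apply key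
        rw [Preadditive.sub_comp, Category.assoc, Category.assoc,
          hαle _ _ (le_max_left J1 J2), hαle _ _ (le_max_right J1 J2),
          G.map_sub, Preadditive.sub_comp, sub_eq_zero]
        exact hfg
      rw [Preadditive.sub_comp, sub_eq_zero, Category.assoc, Category.assoc,
        hαle _ _ (le_max_left J1 J2), hαle _ _ (le_max_right J1 J2)] at hdiff
      exact hdiff
    · intro h
      refine ⟨Sigma.ι (fun t : (Σ k : κ, (G.obj (c k) ⟶ Y'')) => c t.1) ⟨k, h⟩ ≫ α 0, ?_⟩
      show G.map (_ ≫ α 0) ≫ uinf = h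
      erw [G.map_comp, Category.assoc, hαu 0]
      exact tower_zero_fac G c Y'' hpres ⟨k, h⟩

end Engine

section IsoBij

variable {C : Type*} [Category C]

lemma precomp_bijective {X Y Z : C} (e : X ≅ Y) :
    Function.Bijective (fun f : Y ⟶ Z => e.hom ≫ f) := by
  refine Function.bijective_iff_has_inverse.mpr ⟨fun f => e.inv ≫ f, ?_, ?_⟩ <;>
    intro f <;> simp

lemma postcomp_bijective {X Y Z : C} (e : Y ≅ Z) :
    Function.Bijective (fun f : X ⟶ Y => f ≫ e.hom) := by
  refine Function.bijective_iff_has_inverse.mpr ⟨fun f => f ≫ e.inv, ?_, ?_⟩ <;>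
    intro f <;> simp

end IsoBij

section Detect

variable {W : Type u} [Category.{v} W] [HasZeroObject W] [HasShift W ℤ] [Preadditive W]
  [∀ n : ℤ, (shiftFunctor W n).Additive] [Pretriangulated W]

variable {κ : Type v} {c : κ → W}

lemma isIso_of_bijective_family
    (hsh : ∀ k : κ, ∃ k' : κ, Nonempty ((((c k)⟦(-1:ℤ)⟧ : W)) ≅ c k'))
    (hgen : ∀ X : W, (∀ (k : κ) (f : c k ⟶ X), f = 0) → IsZero X)
    {A B : W} (d : A ⟶ B)
    (hbij : ∀ k, Function.Bijective (fun f : c k ⟶ A => f ≫ d)) : IsIso d := by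
  obtain ⟨Cn, q, δ, hdist⟩ := Pretriangulated.distinguished_cocone_triangle d
  have hzero : ∀ (k : κ) (f : c k ⟶ Cn), f = 0 := by
    intro k f
    obtain ⟨k', ⟨e⟩⟩ := hsh k
    let Ee : ∀ Z : W, (c k' ⟶ Z) ≃+ (c k ⟶ ((Z⟦(1:ℤ)⟧ : W))) := fun Z =>
      (precompAddEquiv e Z).trans (shiftHomEquiv (c k) Z (-1) 1 (by ring))
    have hnat : ∀ {Z Z' : W} (x : c k' ⟶ Z) (v : Z ⟶ Z'),
        Ee Z' (x ≫ v) = Ee Z x ≫ v⟦(1:ℤ)⟧' := by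
      intro Z Z' x v
      show shiftHomEquiv (c k) Z' (-1) 1 _ (e.hom ≫ x ≫ v) = _
      rw [← Category.assoc]
      exact shiftHomEquiv_naturality (-1) 1 (by ring) (e.hom ≫ x) v
    have hb1 : Function.Bijective
        (fun (x : c k ⟶ ((A⟦(1:ℤ)⟧ : W))) => x ≫ d⟦(1:ℤ)⟧') := by
      have heq : (fun (x : c k ⟶ ((A⟦(1:ℤ)⟧ : W))) => x ≫ d⟦(1:ℤ)⟧')
          = fun x => Ee B ((Ee A).symm x ≫ d) := by
        funext x
        rw [hnat, AddEquiv.apply_symm_apply]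
      rw [heq]
      have : (fun (x : c k ⟶ ((A⟦(1:ℤ)⟧ : W))) => Ee B ((Ee A).symm x ≫ d))
          = (Ee B) ∘ (fun y : c k' ⟶ A => y ≫ d) ∘ (Ee A).symm := rfl
      rw [this]
      exact (Ee B).bijective.comp ((hbij k').comp (Ee A).symm.bijective)
    have h3 : f ≫ δ = 0 := by
      apply hb1.injective
      show (f ≫ δ) ≫ _ = (0 : c k ⟶ ((A⟦(1:ℤ)⟧ : W))) ≫ _
      rw [zero_comp, Category.assoc,
        show δ ≫ d⟦(1:ℤ)⟧' = 0 from comp_distTriang_mor_zero₃₁ _ hdist, comp_zero]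
    obtain ⟨w, hw⟩ : ∃ w : c k ⟶ B, f = w ≫ q := Triangle.coyoneda_exact₃ _ hdist f h3
    obtain ⟨w', hw'⟩ := (hbij k).surjective w
    simp only at hw'
    have : f = w' ≫ d ≫ q := by
      rw [hw, ← hw', Category.assoc]
    rw [this, show d ≫ q = 0 from comp_distTriang_mor_zero₁₂ _ hdist, comp_zero]
  have hZ : IsZero Cn := hgen Cn hzero
  exact (Triangle.isZero₃_iff_isIso₁ _ hdist).1 hZ

/-- translate the compact-generation condition to the doubly-indexed shifted family -/
lemma gen_family {ι : Type v} {g : ι → W}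
    (hgen : ∀ X : W, (∀ (i : ι) (n : ℤ) (f : g i ⟶ ((X⟦n⟧ : W))), f = 0) → IsZero X)
    (X : W) (hX : ∀ (p : ι × ℤ) (f : (((g p.1)⟦p.2⟧ : W)) ⟶ X), f = 0) : IsZero X := by
  apply hgen
  intro i n f
  have h0 := hX (i, -n)
  have : (shiftHomEquiv (g i) X (-n) n (by ring)).symm f = 0 := h0 _
  have hf : f = shiftHomEquiv (g i) X (-n) n (by ring)
      ((shiftHomEquiv (g i) X (-n) n (by ring)).symm f) :=
    ((shiftHomEquiv (g i) X (-n) n (by ring)).apply_symm_apply f).symm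
  rw [hf, this, map_zero]

end Detect

section Closure

variable {T : Type u} [Category.{v} T] [HasZeroObject T] [HasShift T ℤ] [Preadditive T]
  [∀ n : ℤ, (shiftFunctor T n).Additive] [Pretriangulated T] [HasCoproducts.{v} T]
variable {T'' : Type u} [Category.{v} T''] [HasZeroObject T''] [HasShift T'' ℤ]
  [Preadditive T''] [∀ n : ℤ, (shiftFunctor T'' n).Additive] [Pretriangulated T'']
variable (G : T ⥤ T'') [G.CommShift ℤ] [G.IsTriangulated]
variable (hpres : ∀ (ι' : Type v) (f : ι' → T) (d : Cofan f) (_ : IsColimit d),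
    IsColimit (Cofan.mk (G.obj d.pt) (fun i => G.map (d.inj i))))
variable {R : T} {Y'' : T''}

/-- the comparison map `Hom(Z, R) → Hom(G Z, Y'')` is bijective -/
def bijθ (u : G.obj R ⟶ Y'') (Z : T) : Prop :=
  Function.Bijective (fun f : Z ⟶ R => G.map f ≫ u)

lemma bijθ_of_iso (u : G.obj R ⟶ Y'') {Z Z' : T} (e : Z ≅ Z') (h : bijθ G u Z') :
    bijθ G u Z := by
  have heq : (fun f : Z ⟶ R => G.map f ≫ u)
      = (fun v : G.obj Z ⟶ Y'' => v) ∘ ((fun v => G.map e.hom ≫ v)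
        ∘ ((fun f' : Z' ⟶ R => G.map f' ≫ u) ∘ (fun f => e.inv ≫ f))) := by
    funext f
    simp only [Function.comp_apply, ← Functor.map_comp_assoc, Iso.hom_inv_id_assoc]
  show Function.Bijective _
  rw [heq]
  exact Function.Bijective.comp Function.bijective_id
    ((precomp_bijective (G.mapIso e)).comp (h.comp (precomp_bijective e.symm)))

include hpres in
lemma bijθ_cofan (u : G.obj R ⟶ Y'') {ι' : Type v} {f : ι' → T} (d : Cofan f)
    (hd : IsColimit d) (h : ∀ i, bijθ G u (f i)) : bijθ G u d.pt := by
  have hGc := hpres ι' f d hd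
  exact pi_transfer (fun (v : d.pt ⟶ R) => fun i => d.inj i ≫ v)
    (fun (v : G.obj d.pt ⟶ Y'') => fun i => G.map (d.inj i) ≫ v)
    (fun v : d.pt ⟶ R => G.map v ≫ u)
    (fun i => fun (x : f i ⟶ R) => G.map x ≫ u)
    (cofan_hom_bijective hd R)
    (cofan_hom_bijective hGc Y'')
    h (fun x i => by simp [G.map_comp])

lemma bijθ_cone (u : G.obj R ⟶ Y'') {TT : Triangle T} (hdist : TT ∈ distTriang T)
    (h1 : bijθ G u TT.obj₁) (h2 : bijθ G u TT.obj₂)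
    (h1' : bijθ G u ((TT.obj₁⟦(1:ℤ)⟧ : T))) (h2' : bijθ G u ((TT.obj₂⟦(1:ℤ)⟧ : T))) :
    bijθ G u TT.obj₃ := by
  obtain ⟨A, B, Z, φ, ψ, χ⟩ := TT
  dsimp only [Triangle.mk] at h1 h2 h1' h2' ⊢
  constructor
  · -- injectivity
    have hker : ∀ x : Z ⟶ R, G.map x ≫ u = 0 → x = 0 := by
      intro x hx
      have hψx : ψ ≫ x = 0 := by
        apply h2.injective
        show G.map (ψ ≫ x) ≫ u = G.map (0 : B ⟶ R) ≫ u
        rw [G.map_comp, Category.assoc, hx, comp_zero, G.map_zero, zero_comp]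
      obtain ⟨a₁, ha₁₀⟩ : ∃ a₁ : (A⟦(1:ℤ)⟧ : T) ⟶ R, x = χ ≫ a₁ :=
        Triangle.yoneda_exact₂ _ (rot_of_distTriang _ hdist) x hψx
      have ha₁ : x = χ ≫ a₁ := ha₁₀
      have hGχ : G.map χ ≫ (G.map a₁ ≫ u) = 0 := by
        rw [← Category.assoc, ← G.map_comp, ← ha₁, hx]
      obtain ⟨w', hw'⟩ := Triangle.yoneda_exact₂ _
        (G.map_distinguished _ (rot_of_distTriang _ (rot_of_distTriang _ hdist)))
        (G.map a₁ ≫ u) hGχ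
      have hw'' : G.map a₁ ≫ u = G.map (-(φ⟦(1:ℤ)⟧')) ≫ w' := hw'
      obtain ⟨b₁, hb₁⟩ := h2'.surjective w'
      simp only at hb₁
      have : G.map a₁ ≫ u = G.map ((-(φ⟦(1:ℤ)⟧')) ≫ b₁) ≫ u := by
        rw [G.map_comp, Category.assoc, hb₁]
        exact hw''
      have ha₂ : a₁ = (-(φ⟦(1:ℤ)⟧')) ≫ b₁ := h1'.injective this
      rw [ha₁, ha₂, ← Category.assoc, Preadditive.comp_neg, Preadditive.neg_comp,
        show χ ≫ φ⟦(1:ℤ)⟧' = 0 from comp_distTriang_mor_zero₃₁ _ hdist,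
        zero_comp, neg_zero]
    intro a b hab
    simp only at hab
    apply sub_eq_zero.mp
    apply hker
    rw [G.map_sub, Preadditive.sub_comp, sub_eq_zero]
    exact hab
  · -- surjectivity
    intro y
    obtain ⟨b, hb⟩ := h2.surjective (G.map ψ ≫ y)
    simp only at hb
    have hφb : φ ≫ b = 0 := by
      apply h1.injective
      show G.map (φ ≫ b) ≫ u = G.map (0 : A ⟶ R) ≫ u
      rw [G.map_zero, zero_comp, G.map_comp, Category.assoc, hb, ← Category.assoc,
        ← G.map_comp, show φ ≫ ψ = 0 from comp_distTriang_mor_zero₁₂ _ hdist,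
        G.map_zero, zero_comp]
    obtain ⟨c₀, hc₀⟩ := Triangle.yoneda_exact₂ _ hdist b hφb
    have hz : G.map ψ ≫ (y - (G.map c₀ ≫ u)) = 0 := by
      rw [Preadditive.comp_sub, ← Category.assoc, ← G.map_comp, ← hc₀, hb, sub_self]
    obtain ⟨w, hwx₀⟩ := Triangle.yoneda_exact₂ _
      (G.map_distinguished _ (rot_of_distTriang _ hdist)) (y - (G.map c₀ ≫ u)) hz
    have hwx : y - (G.map c₀ ≫ u) = G.map χ ≫ w := hwx₀
    obtain ⟨a₁, ha₁⟩ := h1'.surjective w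
    simp only at ha₁
    refine ⟨c₀ + χ ≫ a₁, ?_⟩
    show G.map (c₀ + χ ≫ a₁) ≫ u = y
    rw [G.map_add, Preadditive.add_comp, G.map_comp, Category.assoc, ha₁, ← hwx]
    abel

include hpres in
lemma bijθ_hull (u : G.obj R ⟶ Y'') {κ : Type v} {c : κ → T}
    (hsh : ∀ (k : κ) (m : ℤ), ∃ k', Nonempty ((((c k)⟦m⟧ : T)) ≅ c k'))
    (h0 : ∀ k, bijθ G u (c k)) {Z : T} (hZ : Hull c Z) :
    ∀ m : ℤ, bijθ G u ((Z⟦m⟧ : T)) := by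
  induction hZ with
  | base k =>
      intro m
      obtain ⟨k', ⟨e⟩⟩ := hsh k m
      exact bijθ_of_iso G u e (h0 k')
  | of_iso e hX ih =>
      intro m
      exact bijθ_of_iso G u ((shiftFunctor T m).mapIso e).symm (ih m)
  | cofan f d hd hf ih =>
      intro m
      have hd' : IsColimit (Cofan.mk ((d.pt⟦m⟧ : T)) (fun i => (d.inj i)⟦m⟧')) :=
        isColimitCofanMap (shiftFunctor T m) hd
      exact bijθ_cofan G hpres u (Cofan.mk _ _) hd' (fun i => ih i m)
  | cone φ ψ χ hdist hA hB ihA ihB =>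
      intro m
      refine bijθ_cone G u (Triangle.shift_distinguished _ hdist m) (ihA m) (ihB m) ?_ ?_
      · exact bijθ_of_iso G u (((shiftFunctorAdd' T m 1 (m+1) rfl).app _).symm) (ihA (m+1))
      · exact bijθ_of_iso G u (((shiftFunctorAdd' T m 1 (m+1) rfl).app _).symm) (ihB (m+1))

end Closure

section Assemble

variable {T : Type u} [Category.{v} T] [HasZeroObject T] [HasShift T ℤ] [Preadditive T]
  [∀ n : ℤ, (shiftFunctor T n).Additive] [Pretriangulated T] [HasCoproducts.{v} T]
variable {T'' : Type u} [Category.{v} T''] [HasZeroObject T''] [HasShift T'' ℤ]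
  [Preadditive T''] [∀ n : ℤ, (shiftFunctor T'' n).Additive] [Pretriangulated T'']
variable (G : T ⥤ T'') [G.CommShift ℤ] [G.IsTriangulated]

theorem isLeftAdjoint_of_preserves
    (hT : IsCompactlyGenerated T)
    (hpres : ∀ (ι' : Type v) (f : ι' → T) (d : Cofan f) (_ : IsColimit d),
      IsColimit (Cofan.mk (G.obj d.pt) (fun i => G.map (d.inj i)))) :
    G.IsLeftAdjoint := by
  classical
  obtain ⟨ι, g, hcpt, hgen⟩ := hT
  set c : ι × ℤ → T := fun p => ((g p.1)⟦p.2⟧ : T) with hc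
  have hsh : ∀ (p : ι × ℤ) (m : ℤ), ∃ p', Nonempty ((((c p)⟦m⟧ : T)) ≅ c p') :=
    fun p m => ⟨(p.1, p.2 + m),
      ⟨((shiftFunctorAdd' T p.2 m (p.2 + m) rfl).app (g p.1)).symm⟩⟩
  have hc_cpt : ∀ p, IsCompactObj (c p) :=
    fun p => isCompactObj_shift (hcpt p.1) p.2 (-p.2) (by ring)
  have hc_cpt' : ∀ p, IsCompactObj (((c p)⟦(-1:ℤ)⟧ : T)) := by
    intro p
    obtain ⟨p', ⟨e⟩⟩ := hsh p (-1)
    exact isCompactObj_of_iso e.symm (hc_cpt p')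
  have hgen' : ∀ X : T, (∀ (p : ι × ℤ) (f : c p ⟶ X), f = 0) → IsZero X :=
    gen_family hgen
  have hpres_id : ∀ (ι' : Type v) (f : ι' → T) (d : Cofan f) (_ : IsColimit d),
      IsColimit (Cofan.mk ((𝟭 T).obj d.pt) (fun i => (𝟭 T).map (d.inj i))) :=
    fun ι' f d hd => (show IsColimit (Cofan.mk d.pt d.inj) from hd)
  have hdense : ∀ Z : T, Hull c Z := by
    intro Z
    obtain ⟨X, u, hX, hbij⟩ := engine (𝟭 T) c Z hpres_id hc_cpt hc_cpt'
    have hbij' : ∀ p, Function.Bijective (fun f : c p ⟶ X => f ≫ u) := fun p => hbij p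
    have : IsIso u := isIso_of_bijective_family (fun p => hsh p (-1)) hgen' u hbij'
    exact Hull.of_iso (asIso u) hX
  have hrep : ∀ Y'' : T'', ∃ (RY : T) (uY : G.obj RY ⟶ Y''),
      ∀ Z : T, Function.Bijective (fun f : Z ⟶ RY => G.map f ≫ uY) := by
    intro Y''
    obtain ⟨RY, uY, hRhull, hbij⟩ := engine G c Y'' hpres hc_cpt hc_cpt'
    refine ⟨RY, uY, fun Z => ?_⟩
    have h := bijθ_hull G hpres uY hsh hbij (hdense Z) 0
    exact bijθ_of_iso G uY (((shiftFunctorZero T ℤ).app Z).symm) h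
  choose RY uY hbij using hrep
  let E : ∀ (Y : T'') (X : T), (X ⟶ RY Y) ≃ (G.obj X ⟶ Y) :=
    fun Y X => Equiv.ofBijective _ (hbij Y X)
  have he : ∀ (X' X : T) (Y : T'') (f : X' ⟶ X) (gg : G.obj X ⟶ Y),
      (E Y X').symm (G.map f ≫ gg) = f ≫ (E Y X).symm gg := by
    intro X' X Y f gg
    apply (E Y X').injective
    rw [Equiv.apply_symm_apply]
    show G.map f ≫ gg = G.map (f ≫ (E Y X).symm gg) ≫ uY Y
    rw [G.map_comp, Category.assoc]
    congr 1
    exact (Equiv.apply_symm_apply (E Y X) gg).symm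
  exact ⟨⟨_, ⟨Adjunction.adjunctionOfEquivRight (fun X Y => (E Y X).symm) he⟩⟩⟩

end Assemble

section AB

variable {T' T : Type u}
variable [Category.{v} T'] [HasZeroObject T'] [HasShift T' ℤ] [Preadditive T']
  [∀ n : ℤ, (shiftFunctor T' n).Additive] [Pretriangulated T'] [HasCoproducts.{v} T']
variable [Category.{v} T] [HasZeroObject T] [HasShift T ℤ] [Preadditive T]
  [∀ n : ℤ, (shiftFunctor T n).Additive] [Pretriangulated T] [HasCoproducts.{v} T]
variable (F : T' ⥤ T) (G : T ⥤ T') [G.CommShift ℤ] [G.IsTriangulated]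

theorem compact_preserved (adj : F ⊣ G)
    (hb : ∀ ι : Type v, Nonempty (PreservesColimitsOfShape (Discrete ι) G))
    {X : T'} (hX : IsCompactObj X) : IsCompactObj (F.obj X) := by
  intro ι₀ _ g cc hc
  haveI : PreservesColimitsOfShape (Discrete ι₀) G := (hb ι₀).some
  have hd' : IsColimit (Cofan.mk (G.obj cc.pt) (fun i => G.map (cc.inj i))) :=
    isColimitCofanMap G hc
  have hbX : Function.Bijective
      (homMap (fun i => G.obj (g i)) X (fun i => G.map (cc.inj i))) :=
    hX ι₀ (fun i => G.obj (g i)) (Cofan.mk _ _) hd'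
  exact (bijective_homMap_iff (g := fun i => G.obj (g i)) (g' := g)
    (fun i => G.map (cc.inj i)) cc.inj
    (fun i => (homAddEquiv adj X (g i)).symm) ((homAddEquiv adj X cc.pt).symm)
    (fun i u => adj.homEquiv_naturality_right_symm u (cc.inj i))).mp hbX

theorem preserves_of_compact (adj : F ⊣ G)
    (hT' : IsCompactlyGenerated T')
    (ha : ∀ X : T', IsCompactObj X → IsCompactObj (F.obj X)) :
    ∀ ι₀ : Type v, Nonempty (PreservesColimitsOfShape (Discrete ι₀) G) := by
  classical
  obtain ⟨ι, g, hcpt, hgen⟩ := hT'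
  set c : ι × ℤ → T' := fun p => ((g p.1)⟦p.2⟧ : T') with hc
  have hsh : ∀ (p : ι × ℤ) (m : ℤ), ∃ p', Nonempty ((((c p)⟦m⟧ : T')) ≅ c p') :=
    fun p m => ⟨(p.1, p.2 + m),
      ⟨((shiftFunctorAdd' T' p.2 m (p.2 + m) rfl).app (g p.1)).symm⟩⟩
  have hc_cpt : ∀ p, IsCompactObj (c p) :=
    fun p => isCompactObj_shift (hcpt p.1) p.2 (-p.2) (by ring)
  have hgen' : ∀ X : T', (∀ (p : ι × ℤ) (f : c p ⟶ X), f = 0) → IsZero X :=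
    gen_family hgen
  intro ι₀
  have key : ∀ Y : ι₀ → T,
      IsColimit (Cofan.mk (G.obj (∐ Y)) (fun i => G.map (Sigma.ι Y i))) := by
    intro Y
    let ψ : (∐ fun i => G.obj (Y i)) ⟶ G.obj (∐ Y) :=
      Sigma.desc (fun i => G.map (Sigma.ι Y i))
    have hψ : IsIso ψ := by
      apply isIso_of_bijective_family (c := c) (fun p => hsh p (-1)) hgen' ψ
      intro p
      have map1 : Function.Bijective
          (homMap (fun i => G.obj (Y i)) (c p) (Sigma.ι (fun i => G.obj (Y i)))) :=
        hc_cpt p ι₀ (fun i => G.obj (Y i))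
          (Cofan.mk (∐ (fun i => G.obj (Y i))) (Sigma.ι (fun i => G.obj (Y i))))
          (coproductIsCoproduct (fun i => G.obj (Y i)))
      have map2 : Function.Bijective
          (homMap (fun i => G.obj (Y i)) (c p) (fun i => G.map (Sigma.ι Y i))) := by
        have hFc : IsCompactObj (F.obj (c p)) := ha _ (hc_cpt p)
        have hbF : Function.Bijective (homMap Y (F.obj (c p)) (Sigma.ι Y)) :=
          hFc ι₀ Y (Cofan.mk (∐ Y) (Sigma.ι Y)) (coproductIsCoproduct Y)
        exact (bijective_homMap_iff (g := Y) (g' := fun i => G.obj (Y i)) (Sigma.ι Y)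
          (fun i => G.map (Sigma.ι Y i))
          (fun i => homAddEquiv adj (c p) (Y i)) (homAddEquiv adj (c p) (∐ Y))
          (fun i u => homAddEquiv_naturality adj u (Sigma.ι Y i))).mp hbF
      have hsq : ∀ x, homMap (fun i => G.obj (Y i)) (c p) (fun i => G.map (Sigma.ι Y i)) x
          = homMap (fun i => G.obj (Y i)) (c p) (Sigma.ι (fun i => G.obj (Y i))) x ≫ ψ := by
        intro x
        induction x using DirectSum.induction_on with
        | zero => rw [map_zero, map_zero, zero_comp]
        | of j a =>
            rw [homMap_of, homMap_of, Category.assoc,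
              show Sigma.ι (fun i => G.obj (Y i)) j ≫ ψ = G.map (Sigma.ι Y j) from
                Sigma.ι_desc _ _]
        | add x y hx hy =>
            rw [map_add, map_add, hx, hy, Preadditive.add_comp]
      constructor
      · intro a b hab
        simp only at hab
        obtain ⟨x, rfl⟩ := map1.surjective a
        obtain ⟨y, rfl⟩ := map1.surjective b
        exact congrArg _ (map2.injective ((hsq x).trans (hab.trans (hsq y).symm)))
      · intro yy
        obtain ⟨x, hx⟩ := map2.surjective yy
        exact ⟨homMap (fun i => G.obj (Y i)) (c p) (Sigma.ι (fun i => G.obj (Y i))) x,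
          (hsq x).symm.trans hx⟩
    refine IsColimit.ofIsoColimit (coproductIsCoproduct (fun i => G.obj (Y i))) ?_
    refine Cocones.ext (asIso ψ) (fun j => ?_)
    obtain ⟨j⟩ := j
    exact Sigma.ι_desc _ _
  refine ⟨⟨fun {K} => ?_⟩⟩
  have e : Discrete.functor (fun i => K.obj ⟨i⟩) ≅ K := Discrete.natIsoFunctor.symm
  haveI : PreservesColimit (Discrete.functor (fun i => K.obj ⟨i⟩)) G :=
    preservesColimit_of_preserves_colimit_cocone
      (coproductIsCoproduct (fun i => K.obj ⟨i⟩))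
      (isColimitMapCoconeOfCofan G _ (key _))
  exact preservesColimit_of_iso_diagram G e

end AB

end Aux

/-- **Neeman.** Let `T` and `T'` be compactly generated triangulated
categories with small coproducts, and `(F, G)` an adjoint pair with `F : T' ⥤ T` and
`G : T ⥤ T'`. The following are equivalent: (a) `F` preserves compact objects;
(b) `G` preserves small coproducts; (c) `G` has a right adjoint. -/
theorem statement6
    {T' T : Type u}
    [Category.{v} T'] [HasZeroObject T'] [HasShift T' ℤ] [Preadditive T']
    [∀ n : ℤ, (shiftFunctor T' n).Additive] [Pretriangulated T']
    [HasCoproducts.{v} T']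
    [Category.{v} T] [HasZeroObject T] [HasShift T ℤ] [Preadditive T]
    [∀ n : ℤ, (shiftFunctor T n).Additive] [Pretriangulated T]
    [HasCoproducts.{v} T]
    (F : T' ⥤ T) [F.CommShift ℤ] [F.IsTriangulated]
    (G : T ⥤ T') [G.CommShift ℤ] [G.IsTriangulated]
    (hT' : IsCompactlyGenerated T') (hT : IsCompactlyGenerated T)
    (adj : F ⊣ G) :
    ((∀ X : T', IsCompactObj X → IsCompactObj (F.obj X)) ↔
      (∀ ι : Type v, Nonempty (PreservesColimitsOfShape (Discrete ι) G))) ∧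
    ((∀ ι : Type v, Nonempty (PreservesColimitsOfShape (Discrete ι) G)) ↔
      G.IsLeftAdjoint) := by
  constructor
  · constructor
    · intro ha ι₀
      exact Aux.preserves_of_compact F G adj hT' ha ι₀
    · intro hb X hX
      exact Aux.compact_preserved F G adj hb hX
  · constructor
    · intro hb
      exact Aux.isLeftAdjoint_of_preserves G hT
        (fun ι' f d hd => by
          haveI : PreservesColimitsOfShape (Discrete ι') G := (hb ι').some
          exact Aux.isColimitCofanMap G hd)
    · intro hGla ι₀
      haveI := hGla
      exact ⟨(Adjunction.ofIsLeftAdjoint G).leftAdjoint_preservesColimits.preservesColimitsOfShape⟩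


end Paper
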